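/- Let Q be the bilinear form on ℤ² with matrix (−1, 1; 0, −1) (i.e., Q((a,b),(c,d)) = −ac + ad − bd). Let v ∈ ℤ² be primitive with Q(v,v) < −1, and let v₊, v₋ be the unique pair with v₋ × v = v × v₊ = v₋ × v₊ = 1 and |v₊|,|v₋| < |v|. Then Q(v₊, v₋) < 0. -/

import Mathlib

/-- Cross product on ℤ²: (a,b) × (c,d) = ad − bc. -/
def cross (v w : ℤ × ℤ) : ℤ := v.1 * w.2 - v.2 * w.1

/-- Euclidean norm of a vector in ℤ². -/
noncomputable def enorm (v : ℤ × ℤ) : ℝ := Real.sqrt ((v.1 : ℝ) ^ 2 + (v.2 : ℝ) ^ 2)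

/-- A vector of ℤ² is primitive if its coordinates are coprime. -/
def IsPrimitive (v : ℤ × ℤ) : Prop := Int.gcd v.1 v.2 = 1

/-- The bilinear form with matrix `(−1, 1; 0, −1)`: `Q((a,b),(c,d)) = −ac + ad − bd`. -/
def QIplus (v w : ℤ × ℤ) : ℤ := -(v.1 * w.1) + v.1 * w.2 - v.2 * w.2

lemma enorm_lt_sq {x y : ℤ × ℤ} (h : _root_.enorm x < _root_.enorm y) :
    x.1 ^ 2 + x.2 ^ 2 < y.1 ^ 2 + y.2 ^ 2 := by
  have h' : ((x.1 : ℝ) ^ 2 + (x.2 : ℝ) ^ 2) < ((y.1 : ℝ) ^ 2 + (y.2 : ℝ) ^ 2) := by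
    have hx : (0:ℝ) ≤ (x.1 : ℝ) ^ 2 + (x.2 : ℝ) ^ 2 := by positivity
    exact (Real.sqrt_lt_sqrt_iff hx).mp h
  exact_mod_cast h'

set_option maxHeartbeats 800000 in
lemma Iplus_core (p q r s : ℤ)
    (h3 : p * s - q * r = 1)
    (hQ : -((p + r) * (p + r)) + (p + r) * (q + s) - (q + s) * (q + s) < -1)
    (h4' : r ^ 2 + s ^ 2 < (p + r) ^ 2 + (q + s) ^ 2)
    (h5' : p ^ 2 + q ^ 2 < (p + r) ^ 2 + (q + s) ^ 2) :
    -(r * p) + r * q - s * q < 0 := by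
  by_contra hcon
  push_neg at hcon
  have hD : p * r + q * s ≤ q * r := by linarith
  have hps : p * s = q * r + 1 := by linarith
  have hG1 : 1 ≤ 2 * (p * r + q * s) + p ^ 2 + q ^ 2 := by nlinarith [h4']
  have hG2 : 1 ≤ 2 * (p * r + q * s) + r ^ 2 + s ^ 2 := by nlinarith [h5']
  have hlag : (p ^ 2 + q ^ 2) * (r ^ 2 + s ^ 2) = (p * r + q * s) ^ 2 + 1 := by
    linear_combination (p * s - q * r + 1) * h3
  have hprod : (p * r) * (q * s) = (q * r + 1) * (q * r) := by
    linear_combination (q * r) * h3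
  -- the "both negative" contradiction, used twice
  have bothneg : ¬ (p * r ≤ -1 ∧ q * s ≤ -1) := by
    rintro ⟨hpr', hqs'⟩
    have hu : p * r + q * s ≤ -2 := by linarith
    have h1 : 1 - 2 * (p * r + q * s) ≤ p ^ 2 + q ^ 2 := by linarith
    have h2 : 1 - 2 * (p * r + q * s) ≤ r ^ 2 + s ^ 2 := by linarith
    have hnn : (0 : ℤ) ≤ 1 - 2 * (p * r + q * s) := by linarith
    have hX : (0 : ℤ) ≤ p ^ 2 + q ^ 2 := by positivity
    have key : (1 - 2 * (p * r + q * s)) * (1 - 2 * (p * r + q * s)) ≤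
        (p ^ 2 + q ^ 2) * (r ^ 2 + s ^ 2) := mul_le_mul h1 h2 hnn hX
    nlinarith [key, hlag, sq_nonneg (p * r + q * s + 2), hu]
  rcases lt_trichotomy (q * r) 0 with hqr | hqr | hqr
  · -- q*r ≤ -1
    rcases eq_or_lt_of_le (show q * r ≤ -1 by linarith) with h | h
    · -- q*r = -1, so p*s = 0
      have hps0 : p * s = 0 := by linarith
      rcases mul_eq_zero.mp hps0 with hp | hs
      · subst hp
        have hq1 : q * (-r) = 1 := by linarith
        have hq2 : q ^ 2 = 1 := by
          rcases Int.eq_one_or_neg_one_of_mul_eq_one hq1 with h' | h' <;> subst h' <;> norm_num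
        nlinarith [hG1, hD, hq2, h]
      · subst hs
        have hr1 : (-r) * q = 1 := by linarith
        have hs2 : r ^ 2 = 1 := by
          rcases Int.eq_one_or_neg_one_of_mul_eq_one hr1 with h' | h' <;>
            [(obtain rfl : r = -1 := by linarith); (obtain rfl : r = 1 := by linarith)] <;> norm_num
        nlinarith [hG2, hD, hs2, h]
    · -- q*r ≤ -2
      rcases le_or_gt (p * r) 0 with hpr | hpr
      · have hqs' : q * s ≤ -1 := by nlinarith [hprod, h]
        have hpr' : p * r ≤ -1 := by nlinarith [hprod, h]
        exact bothneg ⟨hpr', hqs'⟩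
      · have hqs' : 1 ≤ q * s := by nlinarith [hprod, h]
        linarith [hD, hqs', hpr, h]
  · -- q*r = 0, p*s = 1
    have hps1 : p * s = 1 := by linarith
    have hp2 : p ^ 2 = 1 ∧ s ^ 2 = 1 := by
      rcases Int.eq_one_or_neg_one_of_mul_eq_one hps1 with h' | h' <;> subst h' <;>
        constructor <;> nlinarith [hps1]
    rcases mul_eq_zero.mp hqr with hq | hr
    · subst hq
      have hpr0 : p * r = 0 := by nlinarith [hG1, hD, hp2.1]
      have hr0 : r = 0 := by
        rcases mul_eq_zero.mp hpr0 with h | h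
        · nlinarith [hp2.1]
        · exact h
      subst hr0
      nlinarith [hQ, hp2.1, hp2.2, hps1]
    · subst hr
      have hqs0 : q * s = 0 := by nlinarith [hG2, hD, hp2.2]
      have hq0 : q = 0 := by
        rcases mul_eq_zero.mp hqs0 with h | h
        · exact h
        · nlinarith [hp2.2]
      subst hq0
      nlinarith [hQ, hp2.1, hp2.2, hps1]
  · -- q*r ≥ 1
    rcases le_or_gt (p * r) 0 with hpr | hpr
    · have hqs' : q * s ≤ -1 := by nlinarith [hprod, hqr]
      have hpr' : p * r ≤ -1 := by nlinarith [hprod, hqr]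
      exact bothneg ⟨hpr', hqs'⟩
    · have hqs' : 1 ≤ q * s := by nlinarith [hprod, hqr]
      have hu : 0 ≤ p * r + q * s := by linarith
      have hq0 : (0 : ℤ) ≤ q * r := by linarith
      have key : (p * r + q * s) * (p * r + q * s) ≤ (q * r) * (q * r) :=
        mul_le_mul hD hD hu hq0
      nlinarith [key, hprod, sq_nonneg (p * r - q * s), sq_nonneg (q * r - 1), hqr]

/-- For the form `I₊` with `n = 1`: if `v` is primitive with `Q(v,v) < −1` and `(v₋, v₊)` is
the unique pair with `v₋ × v = v × v₊ = v₋ × v₊ = 1` and `|v₊|, |v₋| < |v|`, then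
`Q(v₊, v₋) < 0`. -/
theorem Iplus_chi_neg (v vm vp : ℤ × ℤ) (hprim : IsPrimitive v)
    (hQ : QIplus v v < -1)
    (h1 : cross vm v = 1) (h2 : cross v vp = 1) (h3 : cross vm vp = 1)
    (h4 : _root_.enorm vp < _root_.enorm v) (h5 : _root_.enorm vm < _root_.enorm v) :
    QIplus vp vm < 0 := by
  obtain ⟨a, b⟩ := v
  obtain ⟨p, q⟩ := vm
  obtain ⟨r, s⟩ := vp
  have h4' := enorm_lt_sq h4
  have h5' := enorm_lt_sq h5
  simp only [cross, QIplus] at *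
  -- derive a = p + r, b = q + s
  have ha : a = p + r := by linear_combination r * h1 + p * h2 - a * h3
  have hb : b = q + s := by linear_combination s * h1 + q * h2 - b * h3
  subst ha hb
  exact Iplus_core p q r s h3 hQ h4' h5'
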